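/- Let F be a field, n : ℕ, x, y ∈ F and t ∈ F with t ≠ 0. Let D_t be the diagonal matrix indexed by the vertices (m,j) of the graphene triangle with (D_t)[(m,j),(m,j)] = 1 if j is even and t⁻¹ if j is odd. Then t • (D_t · H_n(x,y) · D_t) = H_n(t·x, t·y). -/

import Mathlib

open Matrix

/-- Vertices of the graphene triangle with rows `0, …, n`: row `m` has `2m+1` atoms. -/
abbrev TriIdx (n : ℕ) := (m : Fin (n+1)) × Fin (2*m.val+1)

/-- The Hückel matrix of the graphene triangle, with row-dependent boundary parameters
`x m`, `y m`. -/
def Huckel (R : Type*) [CommRing R] (n : ℕ) (x y : Fin (n+1) → R) :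
    Matrix (TriIdx n) (TriIdx n) R :=
  Matrix.of fun p q =>
    if p.1 = q.1 ∧ (p.2.val + 1 = q.2.val ∨ q.2.val + 1 = p.2.val) then 1
    else if p.1.val + 1 = q.1.val ∧ Even p.2.val ∧ q.2.val = p.2.val + 1 then 1
    else if q.1.val + 1 = p.1.val ∧ Even q.2.val ∧ p.2.val = q.2.val + 1 then 1
    else if 1 ≤ p.1.val ∧ p.1 = q.1 ∧ p.2.val = 0 ∧ q.2.val = 2*p.1.val then y p.1
    else if 1 ≤ p.1.val ∧ p.1 = q.1 ∧ p.2.val = 2*p.1.val ∧ q.2.val = 0 then x p.1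
    else if p.1.val = 0 ∧ q.1.val = 0 then x p.1 + y p.1
    else 0

theorem Huckel_scaling (F : Type*) [Field F] (n : ℕ) (x y t : F) (ht : t ≠ 0) :
    t • (Matrix.diagonal (fun p : TriIdx n => if Even p.2.val then (1 : F) else t⁻¹) *
          Huckel F n (fun _ => x) (fun _ => y) *
          Matrix.diagonal (fun p : TriIdx n => if Even p.2.val then (1 : F) else t⁻¹))
      = Huckel F n (fun _ => t*x) (fun _ => t*y) := by
  ext p q
  have hp2 := p.2.isLt
  have hq2 := q.2.isLt
  simp only [Matrix.smul_apply, diagonal_mul, mul_diagonal, smul_eq_mul, Huckel, of_apply]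
  split_ifs <;>
    simp only [Nat.even_iff] at * <;>
    first
      | omega
      | (field_simp; try ring)
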